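/- Let x be a vector of n positive reals, n ≥ 2, and 2 ≤ k ≤ n. Then (n−k)E_{k+1}(x)/E_k(x) − 2(n−k+1)E_k(x)/E_{k−1}(x) + (n−k+2)E_{k−1}(x)/E_{k−2}(x) ≥ 0, where E_j is the normalized elementary symmetric polynomial (with E_{n+1} = 0). Consequently, the k-DPP expectation D_k(x) = e₁(x) − (k+1)e_{k+1}(x)/e_k(x) is concave in k: D_{j+1}(x) − D_j(x) ≤ D_j(x) − D_{j−1}(x) for all 0 < j < n. -/

import Mathlib

open BigOperators

/-- The elementary symmetric polynomial of degree `k` in the entries of `x`. -/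
noncomputable def esym {n : ℕ} (k : ℕ) (x : Fin n → ℝ) : ℝ :=
  ∑ S ∈ Finset.univ.powersetCard k, ∏ i ∈ S, x i

/-- The normalized elementary symmetric polynomial `E_k(x) = e_k(x)/C(n,k)`
(equal to `0` for `k > n`). -/
noncomputable def nesym {n : ℕ} (k : ℕ) (x : Fin n → ℝ) : ℝ :=
  esym k x / (n.choose k)

/-- The k-DPP expectation `D_k(x) = e₁(x) − (k+1) e_{k+1}(x)/e_k(x)`. -/
noncomputable def dpp {n : ℕ} (k : ℕ) (x : Fin n → ℝ) : ℝ :=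
  esym 1 x - (k + 1) * esym (k + 1) x / esym k x

section Aux
open Finset Polynomial

-- generalized over finsets
noncomputable def Es {ι : Type*} [DecidableEq ι] (x : ι → ℝ) (s : Finset ι) (k : ℕ) : ℝ :=
  ∑ S ∈ s.powersetCard k, ∏ i ∈ S, x i

lemma esym_eq_Es {n k : ℕ} (x : Fin n → ℝ) : esym k x = Es x Finset.univ k := rfl

@[simp] lemma Es_zero {ι : Type*} [DecidableEq ι] (x : ι → ℝ) (s : Finset ι) :
    Es x s 0 = 1 := by simp [Es]

lemma Es_one {ι : Type*} [DecidableEq ι] (x : ι → ℝ) (s : Finset ι) :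
    Es x s 1 = ∑ i ∈ s, x i := by
  simp [Es, Finset.powersetCard_one, Finset.sum_map]

lemma Es_of_card_lt {ι : Type*} [DecidableEq ι] (x : ι → ℝ) {s : Finset ι} {k : ℕ}
    (h : s.card < k) : Es x s k = 0 := by
  simp [Es, Finset.powersetCard_eq_empty.2 h]

lemma Es_insert {ι : Type*} [DecidableEq ι] (x : ι → ℝ) {s : Finset ι} {a : ι}
    (ha : a ∉ s) (k : ℕ) :
    Es x (insert a s) (k + 1) = Es x s (k + 1) + x a * Es x s k := by
  rw [Es, Finset.powersetCard_succ_insert ha]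
  rw [Finset.sum_union]
  · congr 1
    rw [Finset.sum_image]
    · rw [Es, Finset.mul_sum]
      refine Finset.sum_congr rfl fun S hS => ?_
      rw [Finset.mem_powersetCard] at hS
      rw [Finset.prod_insert (fun h => ha (hS.1 h))]
    · intro S hS T hT hST
      rw [Finset.mem_coe, Finset.mem_powersetCard] at hS hT
      have hSa : a ∉ S := fun h => ha (hS.1 h)
      have hTa : a ∉ T := fun h => ha (hT.1 h)
      have := congrArg (Finset.erase · a) hST
      simpa [Finset.erase_insert hSa, Finset.erase_insert hTa] using this
  · rw [Finset.disjoint_left]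
    intro S hS hS'
    rw [Finset.mem_powersetCard] at hS
    rw [Finset.mem_image] at hS'
    obtain ⟨T, hT, rfl⟩ := hS'
    exact ha (hS.1 (Finset.mem_insert_self a T))

lemma Es_two_three {ι : Type*} [DecidableEq ι] (x : ι → ℝ) (s : Finset ι) :
    2 * Es x s 2 = (∑ i ∈ s, x i) ^ 2 - ∑ i ∈ s, (x i) ^ 2 ∧
    6 * Es x s 3 = (∑ i ∈ s, x i) ^ 3 - 3 * (∑ i ∈ s, x i) * (∑ i ∈ s, (x i) ^ 2)
      + 2 * ∑ i ∈ s, (x i) ^ 3 := by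
  classical
  induction s using Finset.induction with
  | empty =>
    have h : ∀ k, 0 < k → (∅ : Finset ι).powersetCard k = ∅ := fun k hk =>
      Finset.powersetCard_eq_empty.2 (by simpa)
    rw [Es, Es, h 2 (by norm_num), h 3 (by norm_num)]
    norm_num
  | insert _ _ ha =>
    rename_i a s ih
    obtain ⟨ih2, ih3⟩ := ih
    have h2 : Es x (insert a s) 2 = Es x s 2 + x a * Es x s 1 := Es_insert x ha 1
    have h3 : Es x (insert a s) 3 = Es x s 3 + x a * Es x s 2 := Es_insert x ha 2
    rw [Finset.sum_insert ha, Finset.sum_insert ha, Finset.sum_insert ha]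
    constructor
    · rw [h2, Es_one]; linear_combination ih2
    · rw [h3]; linear_combination ih3 + 3 * x a * ih2

lemma G2_nonneg {ι : Type*} [DecidableEq ι] (x : ι → ℝ) (s : Finset ι)
    (hx : ∀ i ∈ s, 0 ≤ x i) :
    0 ≤ 3 * Es x s 3 * Es x s 1 * Es x s 0 + 1 * Es x s 2 * (Es x s 1) ^ 2
      - 4 * (Es x s 2) ^ 2 * Es x s 0 := by
  obtain ⟨h2, h3⟩ := Es_two_three x s
  have hcs : (∑ i ∈ s, (x i) ^ 2) ^ 2 ≤ (∑ i ∈ s, x i) * ∑ i ∈ s, (x i) ^ 3 :=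
    Finset.sum_sq_le_sum_mul_sum_of_sq_eq_mul s (fun i hi => hx i hi)
      (fun i hi => pow_nonneg (hx i hi) 3) (fun i hi => by ring)
  have e2 : Es x s 2 = ((∑ i ∈ s, x i) ^ 2 - ∑ i ∈ s, (x i) ^ 2) / 2 := by linarith
  have e3 : Es x s 3 = ((∑ i ∈ s, x i) ^ 3 - 3 * (∑ i ∈ s, x i) * (∑ i ∈ s, (x i) ^ 2)
      + 2 * ∑ i ∈ s, (x i) ^ 3) / 6 := by linarith
  have key : 3 * Es x s 3 * Es x s 1 * Es x s 0 + 1 * Es x s 2 * (Es x s 1) ^ 2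
      - 4 * (Es x s 2) ^ 2 * Es x s 0
      = (∑ i ∈ s, x i) * (∑ i ∈ s, (x i) ^ 3) - (∑ i ∈ s, (x i) ^ 2) ^ 2 := by
    rw [Es_zero, Es_one, e2, e3]; ring
  linarith

lemma esym_pos {n k : ℕ} (x : Fin n → ℝ) (hx : ∀ i, 0 < x i) (hk : k ≤ n) :
    0 < esym k x := by
  refine Finset.sum_pos (fun S hS => Finset.prod_pos fun i _ => hx i) ?_
  exact Finset.powersetCard_nonempty.2 (by simpa using hk)

lemma esym_eq_zero {n k : ℕ} (x : Fin n → ℝ) (hk : n < k) : esym k x = 0 := by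
  rw [esym, Finset.powersetCard_eq_empty.2 (by simpa using hk), Finset.sum_empty]

lemma esym_top {n : ℕ} (x : Fin n → ℝ) : esym n x = ∏ i, x i := by
  rw [esym, show (Finset.univ : Finset (Fin n)).powersetCard n = {Finset.univ} from ?_]
  · simp
  · have := Finset.powersetCard_self (Finset.univ : Finset (Fin n))
    simpa using this

lemma esym_inv {n : ℕ} (x : Fin n → ℝ) (hx : ∀ i, 0 < x i) {j : ℕ} (hj : j ≤ n) :
    esym j (fun i => (x i)⁻¹) = esym (n - j) x / esym n x := by
  have hprodpos : (0:ℝ) < ∏ i, x i := Finset.prod_pos fun i _ => hx i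
  have hn : esym n x = ∏ i, x i := esym_top x
  rw [hn, eq_div_iff (ne_of_gt hprodpos)]
  rw [esym, esym, Finset.sum_mul]
  refine Finset.sum_nbij' (fun S => Sᶜ) (fun S => Sᶜ) ?_ ?_ ?_ ?_ ?_
  · intro S hS
    rw [Finset.mem_powersetCard_univ] at hS ⊢
    rw [Finset.card_compl, hS]
    simp
  · intro S hS
    rw [Finset.mem_powersetCard_univ] at hS ⊢
    rw [Finset.card_compl, hS]
    simp
    omega
  · intro S _; simp
  · intro S _; simp
  · intro S hS
    rw [Finset.mem_powersetCard_univ] at hS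
    have key : (∏ i ∈ Sᶜ, x i) * ∏ i ∈ S, x i = ∏ i, x i := by
      rw [mul_comm, Finset.prod_mul_prod_compl]
    have hSpos : (0:ℝ) < ∏ i ∈ S, x i := Finset.prod_pos fun i _ => hx i
    rw [Finset.prod_inv_distrib, eq_comm, mul_comm, ← key, mul_assoc,
      mul_inv_cancel₀ (ne_of_gt hSpos), mul_one]

lemma multiset_to_fun (s : Multiset ℝ) (m : ℕ) (h : Multiset.card s = m) :
    ∃ f : Fin m → ℝ, Finset.univ.val.map f = s := by
  obtain ⟨l, rfl⟩ : ∃ l : List ℝ, (l : Multiset ℝ) = s := ⟨s.toList, s.coe_toList⟩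
  have e : l.length = m := by simpa using h
  subst e
  refine ⟨l.get, ?_⟩
  have h1 : (Finset.univ : Finset (Fin l.length)).val = ↑(List.finRange l.length) := rfl
  rw [h1]
  rw [Multiset.map_coe]
  rw [List.map_get_finRange]

lemma exists_deriv (m' : ℕ) (u : Fin (m' + 1) → ℝ) (hu : ∀ i, 0 < u i) :
    ∃ w : Fin m' → ℝ, (∀ i, 0 < w i) ∧
      ∀ j : ℕ, j ≤ m' → (m' + 1 : ℝ) * esym j w = ((m' + 1 : ℝ) - j) * esym j u := by
  classical
  set P : ℝ[X] := ∏ i : Fin (m' + 1), (X + C (u i)) with hP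
  have hPmonic : P.Monic := monic_prod_of_monic _ _ fun i _ => monic_X_add_C (u i)
  have hPdeg : P.natDegree = m' + 1 := by
    rw [hP, natDegree_prod_of_monic _ _ fun i _ => monic_X_add_C (u i)]
    simp [natDegree_X_add_C]
  have hPcoeff : ∀ j : ℕ, j ≤ m' + 1 → P.coeff j = esym (m' + 1 - j) u := by
    intro j hj
    have := Finset.prod_X_add_C_coeff (Finset.univ : Finset (Fin (m' + 1))) u
      (k := j) (by simpa using hj)
    simpa [esym] using this
  -- roots of P
  have hProots : P.roots = Finset.univ.val.map fun i : Fin (m' + 1) => -u i := by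
    have h1 : P = (((Finset.univ.val.map fun i : Fin (m' + 1) => -u i)).map
        fun a : ℝ => X - C a).prod := by
      rw [hP, Multiset.map_map]
      rw [Finset.prod_eq_multiset_prod]
      congr 1
      refine Multiset.map_congr rfl fun i _ => ?_
      simp [sub_neg_eq_add]
    rw [h1, roots_multiset_prod_X_sub_C]
  have hProotscard : Multiset.card P.roots = m' + 1 := by rw [hProots]; simp
  set Q : ℝ[X] := derivative P with hQ
  have hQcoeff : ∀ j : ℕ, j ≤ m' → Q.coeff j = (j + 1 : ℝ) * esym (m' - j) u := by
    intro j hj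
    rw [hQ, coeff_derivative, hPcoeff (j + 1) (by omega)]
    have : m' + 1 - (j + 1) = m' - j := by omega
    rw [this, mul_comm]
  have hQtop : Q.coeff m' = (m' + 1 : ℝ) := by
    have := hQcoeff m' le_rfl
    rw [this]
    have : m' - m' = 0 := by omega
    rw [this]
    have h0 : esym 0 u = 1 := by simp [esym]
    rw [h0, mul_one]

  have hQne : Q ≠ 0 := by
    intro h
    have h0 := hQtop
    rw [h, coeff_zero] at h0
    norm_cast at h0
  have hQdeg : Q.natDegree = m' := by
    have h1 : Q.natDegree ≤ m' := by
      have h0 := natDegree_derivative_le P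
      rw [hPdeg] at h0
      exact h0.trans (by omega)
    have h2 : m' ≤ Q.natDegree := le_natDegree_of_ne_zero (by
      rw [hQtop]
      positivity)
    omega
  have hQrootscard : Multiset.card Q.roots = m' := by
    have h1 := Polynomial.card_roots_le_derivative P
    rw [← hQ] at h1
    have h2 : Multiset.card Q.roots ≤ Q.natDegree := by
      simpa using Polynomial.card_roots' Q
    rw [hProotscard] at h1
    rw [hQdeg] at h2
    omega
  -- all roots of Q are negative
  have hQrootsneg : ∀ ρ ∈ Q.roots, ρ < 0 := by
    intro ρ hρ
    by_contra hge
    push_neg at hge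
    have hev : Q.eval ρ = 0 := (Polynomial.mem_roots hQne).1 hρ
    have hpos : 0 < Q.eval ρ := by
      rw [Polynomial.eval_eq_sum_range' (n := m' + 1) (by omega)]
      refine Finset.sum_pos' ?_ ⟨0, by simp, ?_⟩
      · intro j hj
        rw [Finset.mem_range] at hj
        have := hQcoeff j (by omega)
        rw [this]
        have h1 : (0:ℝ) < esym (m' - j) u := esym_pos u hu (by omega)
        positivity
      · have := hQcoeff 0 (by omega)
        rw [this]
        have h1 : (0:ℝ) < esym (m' - 0) u := esym_pos u hu (by omega)
        simp
        positivity
    rw [hev] at hpos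
    exact lt_irrefl 0 hpos
  -- Vieta for Q
  have hQlead : Q.leadingCoeff = (m' + 1 : ℝ) := by
    rw [Polynomial.leadingCoeff, hQdeg, hQtop]
  have hVieta : ∀ t : ℕ, t ≤ m' →
      Q.coeff (m' - t) = (m' + 1 : ℝ) * (-1) ^ t * Q.roots.esymm t := by
    intro t ht
    have := Polynomial.coeff_eq_esymm_roots_of_card
      (by rw [hQrootscard, hQdeg]) (k := m' - t) (by rw [hQdeg]; omega)
    rw [hQdeg] at this
    have h2 : m' - (m' - t) = t := by omega
    rw [h2] at this
    rw [this, hQlead]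
  set W : Multiset ℝ := Q.roots.map (fun ρ => -ρ) with hW
  have hWcard : Multiset.card W = m' := by rw [hW]; simp [hQrootscard]
  have hWesymm : ∀ t : ℕ, t ≤ m' →
      (m' + 1 : ℝ) * W.esymm t = ((m' - t : ℕ) + 1 : ℝ) * esym t u := by
    intro t ht
    have hneg : W.esymm t = (-1) ^ t * Q.roots.esymm t := by
      rw [hW]
      exact Multiset.esymm_neg Q.roots t
    have h1 := hVieta t ht
    have h2 := hQcoeff (m' - t) (by omega)
    have h3 : m' - (m' - t) = t := by omega
    rw [h3] at h2
    rw [h2] at h1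
    have hsq : ((-1 : ℝ) ^ t) * ((-1 : ℝ) ^ t) = 1 := by
      rw [← pow_add, ← two_mul, pow_mul]
      norm_num
    have hneg' : Q.roots.esymm t = (-1) ^ t * W.esymm t := by
      rw [hneg, ← mul_assoc, hsq, one_mul]
    rw [hneg'] at h1
    rw [show ((m' : ℝ) + 1) * (-1) ^ t * ((-1) ^ t * W.esymm t)
        = ((m' : ℝ) + 1) * ((-1) ^ t * (-1) ^ t) * W.esymm t from by ring, hsq, mul_one] at h1
    exact h1.symm
  -- convert W to a function
  obtain ⟨w, hw⟩ := multiset_to_fun W m' hWcard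
  have hesymw : ∀ t : ℕ, esym t w = W.esymm t := by
    intro t
    rw [esym, ← hw, Finset.esymm_map_val]
  refine ⟨w, ?_, ?_⟩
  · intro i
    have hmem : w i ∈ W := by
      rw [← hw]
      exact Multiset.mem_map_of_mem w (by simp)
    rw [hW] at hmem
    obtain ⟨ρ, hρ, hρw⟩ := Multiset.mem_map.1 hmem
    have := hQrootsneg ρ hρ
    rw [← hρw]
    linarith
  · intro j hj
    rw [hesymw j, hWesymm j hj]
    congr 1
    push_cast [Nat.cast_sub hj]
    ring

lemma exists_z (m' : ℕ) (x : Fin (m' + 1) → ℝ) (hx : ∀ i, 0 < x i) :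
    ∃ z : Fin m' → ℝ, (∀ i, 0 < z i) ∧
      ∀ j : ℕ, esym 1 x * esym j z = ((j : ℝ) + 1) * esym (j + 1) x := by
  set u : Fin (m' + 1) → ℝ := fun i => (x i)⁻¹ with hu_def
  have hu : ∀ i, 0 < u i := fun i => inv_pos.2 (hx i)
  obtain ⟨w, hw, hwe⟩ := exists_deriv m' u hu
  refine ⟨fun i => (w i)⁻¹, fun i => inv_pos.2 (hw i), ?_⟩
  intro j
  rcases le_or_gt j m' with hj | hj
  · -- in range
    have h1' : esym j (fun i => (w i)⁻¹) * esym m' w = esym (m' - j) w := by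
      rw [esym_inv w hw hj, div_mul_cancel₀]
      exact ne_of_gt (esym_pos w hw le_rfl)
    have h2 : (m' + 1 : ℝ) * esym (m' - j) w = ((j : ℝ) + 1) * esym (m' - j) u := by
      have := hwe (m' - j) (by omega)
      rw [this]
      congr 1
      push_cast [Nat.cast_sub hj]
      ring
    have h3 : (m' + 1 : ℝ) * esym m' w = esym m' u := by
      have := hwe m' le_rfl
      rw [this]
      push_cast
      ring
    have h4 : esym (m' - j) u * esym (m' + 1) x = esym (j + 1) x := by
      have := esym_inv x hx (j := m' - j) (by omega)
      have hidx : m' + 1 - (m' - j) = j + 1 := by omega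
      rw [hidx] at this
      rw [← hu_def] at this
      rw [this, div_mul_cancel₀]
      exact ne_of_gt (esym_pos x hx (by omega))
    have h5 : esym m' u * esym (m' + 1) x = esym 1 x := by
      have := esym_inv x hx (j := m') (by omega)
      have hidx : m' + 1 - m' = 1 := by omega
      rw [hidx] at this
      rw [← hu_def] at this
      rw [this, div_mul_cancel₀]
      exact ne_of_gt (esym_pos x hx (by omega))
    linear_combination (-(esym j (fun i => (w i)⁻¹)) * h5) + ((j : ℝ) + 1) * h4
      - esym (m' + 1) x * esym j (fun i => (w i)⁻¹) * h3
      + esym (m' + 1) x * (m' + 1 : ℝ) * h1' + esym (m' + 1) x * h2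
  · -- out of range
    rw [esym_eq_zero _ hj, esym_eq_zero _ (by omega : m' + 1 < j + 1)]
    ring

noncomputable def Gq {n : ℕ} (l : ℕ) (x : Fin n → ℝ) : ℝ :=
  ((l : ℝ) + 3) * esym (l + 3) x * esym (l + 1) x * esym l x
    + ((l : ℝ) + 1) * esym (l + 2) x * (esym (l + 1) x) ^ 2
    - 2 * ((l : ℝ) + 2) * (esym (l + 2) x) ^ 2 * esym l x

lemma Gq_nonneg : ∀ (l : ℕ) {n : ℕ} (x : Fin n → ℝ), (∀ i, 0 < x i) → 0 ≤ Gq l x := by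
  intro l
  induction l with
  | zero =>
    intro n x hx
    have h := G2_nonneg x Finset.univ (fun i _ => (hx i).le)
    have he : ∀ k, Es x Finset.univ k = esym k x := fun k => rfl
    rw [Gq]
    push_cast
    rw [he 3, he 1, he 0, he 2] at h
    norm_num at h ⊢
    linarith
  | succ l ih =>
    intro n x hx
    rcases lt_or_ge n (l + 3) with hn3 | hn3
    · rw [Gq, esym_eq_zero x (show n < l + 1 + 3 by omega),
        esym_eq_zero x (show n < l + 1 + 2 by omega)]
      ring_nf
      simp
    · obtain ⟨m', rfl⟩ : ∃ m', n = m' + 1 := ⟨n - 1, by omega⟩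
      obtain ⟨z, hz, hze⟩ := exists_z m' x hx
      have he1 : 0 < esym 1 x := esym_pos x hx (by omega)
      have ez : ∀ j : ℕ, esym j z = ((j : ℝ) + 1) * esym (j + 1) x / esym 1 x := by
        intro j
        rw [eq_div_iff (ne_of_gt he1), mul_comm, ← hze j]
      have key : esym 1 x ^ 3 * Gq l z = ((l : ℝ) + 1) * ((l : ℝ) + 2) * ((l : ℝ) + 3)
          * Gq (l + 1) x := by
        rw [Gq, Gq, ez (l + 3), ez (l + 2), ez (l + 1), ez l]
        push_cast
        field_simp
        ring
      have h0 := ih z hz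
      have hc : (0:ℝ) < ((l : ℝ) + 1) * ((l : ℝ) + 2) * ((l : ℝ) + 3) := by positivity
      have h1 : (0:ℝ) ≤ ((l : ℝ) + 1) * ((l : ℝ) + 2) * ((l : ℝ) + 3) * Gq (l + 1) x := by
        rw [← key]
        positivity
      nlinarith [h1, hc]

lemma master {n : ℕ} (l : ℕ) (x : Fin n → ℝ) (hx : ∀ i, 0 < x i) (h : l + 2 ≤ n) :
    0 ≤ ((l : ℝ) + 3) * esym (l + 3) x / esym (l + 2) x
      - 2 * (((l : ℝ) + 2) * esym (l + 2) x / esym (l + 1) x)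
      + ((l : ℝ) + 1) * esym (l + 1) x / esym l x := by
  have e2 : 0 < esym (l + 2) x := esym_pos x hx h
  have e1 : 0 < esym (l + 1) x := esym_pos x hx (by omega)
  have e0 : 0 < esym l x := esym_pos x hx (by omega)
  have key : ((l : ℝ) + 3) * esym (l + 3) x / esym (l + 2) x
      - 2 * (((l : ℝ) + 2) * esym (l + 2) x / esym (l + 1) x)
      + ((l : ℝ) + 1) * esym (l + 1) x / esym l x
      = Gq l x / (esym (l + 2) x * esym (l + 1) x * esym l x) := by
    rw [Gq]
    field_simp
    ring
  rw [key]
  exact div_nonneg (Gq_nonneg l x hx) (by positivity)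

lemma ratio {n : ℕ} (x : Fin n → ℝ) (hx : ∀ i, 0 < x i) {j : ℕ} (hj : j ≤ n) :
    ((n : ℝ) - j) * nesym (j + 1) x / nesym j x
      = ((j : ℝ) + 1) * esym (j + 1) x / esym j x := by
  rcases eq_or_lt_of_le hj with rfl | hjn
  · rw [esym_eq_zero x (by omega : j < j + 1)]
    simp
  · have hc1 : (0:ℝ) < (n.choose j : ℝ) := by
      exact_mod_cast Nat.choose_pos hj
    have hc2 : (0:ℝ) < (n.choose (j+1) : ℝ) := by
      exact_mod_cast Nat.choose_pos (by omega)
    have hej : (0:ℝ) < esym j x := esym_pos x hx hj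
    have hcid : ((n : ℝ) - j) * (n.choose j : ℝ) = ((j : ℝ) + 1) * (n.choose (j+1) : ℝ) := by
      have h0 := Nat.choose_succ_right_eq n j
      have h1 : ((n.choose (j+1) * (j+1) : ℕ) : ℝ) = ((n.choose j * (n - j) : ℕ) : ℝ) := by
        rw [h0]
      push_cast [Nat.cast_sub hj] at h1
      linarith
    rw [nesym, nesym]
    rw [div_eq_div_iff (by positivity) (ne_of_gt hej)]
    field_simp
    linear_combination esym (j + 1) x * hcid


end Aux

/-- For `x` a vector of `n ≥ 2` positive reals and `2 ≤ k ≤ n`: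
`(n−k)E_{k+1}/E_k − 2(n−k+1)E_k/E_{k−1} + (n−k+2)E_{k−1}/E_{k−2} ≥ 0`; consequently the
k-DPP expectation is concave in `k`: `D_{j+1} − D_j ≤ D_j − D_{j−1}` for `0 < j < n`. -/
theorem stmt_10 (n : ℕ) (hn : 2 ≤ n) (x : Fin n → ℝ) (hx : ∀ i, 0 < x i) :
    (∀ k : ℕ, 2 ≤ k → k ≤ n →
      0 ≤ (n - k : ℝ) * nesym (k + 1) x / nesym k x
          - 2 * ((n - k + 1 : ℝ) * nesym k x / nesym (k - 1) x)
          + (n - k + 2 : ℝ) * nesym (k - 1) x / nesym (k - 2) x) ∧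
    (∀ j : ℕ, 0 < j → j < n →
      dpp (j + 1) x - dpp j x ≤ dpp j x - dpp (j - 1) x) := by
  constructor
  · intro k hk2 hkn
    obtain ⟨l, rfl⟩ : ∃ l, k = l + 2 := ⟨k - 2, by omega⟩
    have h1 := ratio x hx (j := l + 2) hkn
    have h2 := ratio x hx (j := l + 1) (by omega)
    have h3 := ratio x hx (j := l) (by omega)
    have hm := master l x hx hkn
    have e1 : l + 2 - 1 = l + 1 := rfl
    have e2 : l + 2 - 2 = l := rfl
    rw [e1, e2]
    push_cast at h1 h2 h3 ⊢
    have c2 : (↑n - (↑l + 2) + 1 : ℝ) = (↑n - (↑l + 1) : ℝ) := by ring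
    have c3 : (↑n - (↑l + 2) + 2 : ℝ) = (↑n - ↑l : ℝ) := by ring
    rw [c2, c3]
    simp only [show l + 2 + 1 = l + 3 from rfl, show l + 1 + 1 = l + 2 from rfl] at h1 h2 ⊢
    rw [h1, h2, h3]
    ring_nf at hm ⊢
    linarith [hm]
  · intro j hj0 hjn
    obtain ⟨l, rfl⟩ : ∃ l, j = l + 1 := ⟨j - 1, by omega⟩
    have hm := master l x hx (by omega)
    have e1 : l + 1 - 1 = l := rfl
    rw [e1, dpp, dpp, dpp]
    simp only [show l + 1 + 1 = l + 2 from rfl, show l + 2 + 1 = l + 3 from rfl]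
    push_cast
    ring_nf at hm ⊢
    linarith [hm]
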